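/- Let D be a division ring, n ≥ 1, M ∈ Mₙ(D) an n×n matrix, α ∈ D^{1×n} a row vector and η ∈ D^{n×1} a column vector. If α Mˡ η = 0 for every l ∈ {0, 1, …, n−1}, then α Mˡ η = 0 for every l ∈ ℕ. -/

import Mathlib

/-- **Zeroness criterion for weighted automata over a division ring.**
Let `D` be a (not necessarily commutative) division ring, `n ≥ 1`,
`M ∈ Mₙ(D)`, `α` a row vector and `η` a column vector over `D`.  If
`α Mˡ η = 0` for every `l ∈ {0, 1, …, n − 1}`, then `α Mˡ η = 0` for every
`l ∈ ℕ`. -/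
theorem weighted_automaton_zeroness (D : Type*) [DivisionRing D] (n : ℕ) (hn : 1 ≤ n)
    (M : Matrix (Fin n) (Fin n) D) (α η : Fin n → D)
    (h : ∀ l < n, dotProduct (Matrix.vecMul α (M ^ l)) η = 0) :
    ∀ l : ℕ, dotProduct (Matrix.vecMul α (M ^ l)) η = 0 := by
  classical
  set f : ℕ → (Fin n → D) := fun i => Matrix.vecMul α (M ^ i) with hf
  set W : ℕ → Submodule D (Fin n → D) := fun k => Submodule.span D (f '' Set.Iio k) with hWdef
  have fmem : ∀ i k, i < k → f i ∈ W k := fun i k hik =>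
    Submodule.subset_span ⟨i, Set.mem_Iio.mpr hik, rfl⟩
  have Wmono : Monotone W := fun a b hab =>
    Submodule.span_mono (Set.image_mono (fun x hx => lt_of_lt_of_le hx hab))
  have Wsucc : ∀ k, W (k + 1) = W k ⊔ Submodule.span D {f k} := by
    intro k
    have hIio : Set.Iio (k + 1) = Set.Iio k ∪ {k} := by
      ext x
      simp only [Set.mem_Iio, Set.mem_union, Set.mem_singleton_iff]
      omega
    rw [hWdef]
    simp only [hIio, Set.image_union, Set.image_singleton, Submodule.span_union]
  have fsucc : ∀ l, f (l + 1) = Matrix.vecMul (f l) M := by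
    intro l
    simp [hf, pow_succ, ← Matrix.vecMul_vecMul]
  -- vecMul maps W k into W (k+1)
  have Tmem : ∀ k v, v ∈ W k → Matrix.vecMul v M ∈ W (k + 1) := by
    intro k v hv
    have hle : W k ≤ Submodule.comap M.vecMulLinear (W (k + 1)) := by
      rw [hWdef, Submodule.span_le]
      rintro _ ⟨i, hi, rfl⟩
      simp only [SetLike.mem_coe, Submodule.mem_comap, Matrix.vecMulLinear_apply]
      rw [← fsucc i]
      exact fmem _ _ (Nat.succ_lt_succ (Set.mem_Iio.mp hi))
    simpa using hle hv
  -- there is k ≤ n with W k = W (k+1)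
  have hex : ∃ k ≤ n, W k = W (k + 1) := by
    by_contra hc
    push_neg at hc
    have hlt : ∀ k ≤ n, W k < W (k + 1) := fun k hk =>
      lt_of_le_of_ne (Wmono (Nat.le_succ k)) (hc k hk)
    have hrank : ∀ k ≤ n + 1, k ≤ Module.finrank D (W k) := by
      intro k
      induction k with
      | zero => intro _; exact Nat.zero_le _
      | succ k ih =>
        intro hk
        have h1 := ih (le_trans (Nat.le_succ k) hk)
        have h2 : Module.finrank D (W k) < Module.finrank D (W (k + 1)) :=
          Submodule.finrank_lt_finrank_of_lt (hlt k (Nat.lt_succ_iff.mp hk))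
        omega
    have hbig := hrank (n + 1) le_rfl
    have hle : Module.finrank D (W (n + 1)) ≤ Module.finrank D (Fin n → D) :=
      Submodule.finrank_le _
    rw [Module.finrank_fin_fun] at hle
    omega
  obtain ⟨k, hkn, hk⟩ := hex
  -- stabilization: W (k + j) = W k
  have hstab : ∀ j, W (k + j) = W k := by
    intro j
    induction j with
    | zero => rfl
    | succ j ih =>
      rw [show k + (j + 1) = (k + j) + 1 by ring, Wsucc]
      have hfm : f (k + j) ∈ W k := by
        rcases Nat.eq_zero_or_pos j with hj | hj
        · subst hj
          have h1 : f (k + 0) ∈ W (k + 1) := fmem _ _ (by omega)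
          rwa [← hk] at h1
        · have heq : f (k + j) = Matrix.vecMul (f (k + j - 1)) M := by
            have harith : k + j = (k + j - 1) + 1 := by omega
            conv_lhs => rw [harith, fsucc]
          rw [heq]
          have h1 : f (k + j - 1) ∈ W (k + j) := fmem (k + j - 1) (k + j) (by omega)
          have h2 := Tmem k _ (ih ▸ h1)
          rwa [← hk] at h2
      rw [ih, sup_eq_left]
      simpa [Submodule.span_singleton_le_iff_mem] using hfm
  -- every f l lies in W n
  have hall : ∀ l, f l ∈ W n := by
    intro l
    have h1 : f l ∈ W (l + 1) := fmem _ _ (Nat.lt_succ_self l)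
    rcases le_or_gt (l + 1) k with hle | hlt
    · exact Wmono (le_trans hle hkn) h1
    · have heq : W (l + 1) = W k := by
        have : l + 1 = k + (l + 1 - k) := by omega
        rw [this, hstab]
      rw [heq] at h1
      exact Wmono hkn h1
  -- W n is contained in the kernel of dotting with η
  have key : ∀ v ∈ W n, dotProduct v η = 0 := by
    intro v hv
    induction hv using Submodule.span_induction with
    | mem x hx =>
      obtain ⟨i, hi, rfl⟩ := hx
      exact h i hi
    | zero => simp
    | add x y _ _ hx hy => rw [add_dotProduct, hx, hy, add_zero]
    | smul c x _ hx => rw [smul_dotProduct, hx, smul_zero]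
  exact fun l => key _ (hall l)
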